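/- Let K be an algebraically closed field equipped with a non-Archimedean absolute value ‖·‖, let δ ≥ 1 be an integer with ‖(δ : K)‖ = 1, and let u ∈ K with ‖u − 1‖ < 1. Then there exists a unique γ ∈ K with γ^δ = u and ‖γ − 1‖ < 1; moreover this γ satisfies ‖γ − 1‖ = ‖u − 1‖. -/

import Mathlib

open IsUltrametricDist Polynomial Finset in
private lemma key_norm_pow_sub_one
    {K : Type*} [NormedField K] [IsUltrametricDist K]
    (δ : ℕ) (hδ : 1 ≤ δ) (hδnorm : ‖(δ : K)‖ = 1)
    (γ : K) (h : ‖γ - 1‖ < 1) : ‖γ ^ δ - 1‖ = ‖γ - 1‖ := by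
  have hγ1 : ‖γ‖ ≤ 1 := by
    have := norm_add_le_max (γ - 1) 1
    simpa using this.trans (max_le h.le (by simp))
  have hpow : ∀ i : ℕ, ‖γ ^ i - 1‖ ≤ ‖γ - 1‖ := by
    intro i
    rw [← geom_sum_mul, norm_mul]
    have hsum : ‖∑ j ∈ range i, γ ^ j‖ ≤ 1 :=
      norm_sum_le_of_forall_le_of_nonneg zero_le_one
        (fun j _ => by rw [norm_pow]; exact pow_le_one₀ (norm_nonneg _) hγ1)
    nlinarith [norm_nonneg (γ - 1)]
  set S : K := ∑ j ∈ range δ, γ ^ j with hS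
  have hSd : ‖S - (δ : K)‖ ≤ ‖γ - 1‖ := by
    have : S - (δ : K) = ∑ j ∈ range δ, (γ ^ j - 1) := by
      rw [Finset.sum_sub_distrib]
      simp [hS]
    rw [this]
    exact norm_sum_le_of_forall_le_of_nonneg (norm_nonneg _) (fun j _ => hpow j)
  have hSnorm : ‖S‖ = 1 := by
    have hlt : ‖S - (δ : K)‖ < ‖(δ : K)‖ := by rw [hδnorm]; exact hSd.trans_lt h
    have he : ‖S‖ = ‖(S - (δ : K)) + (δ : K)‖ := by ring_nf
    rw [he, norm_add_eq_max_of_norm_ne_norm hlt.ne, max_eq_right hlt.le, hδnorm]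
  calc ‖γ ^ δ - 1‖ = ‖S * (γ - 1)‖ := by rw [geom_sum_mul]
    _ = ‖γ - 1‖ := by rw [norm_mul, hSnorm, one_mul]

/-- In an algebraically closed non-Archimedean field, if `‖(δ : K)‖ = 1`
and `‖u − 1‖ < 1`, then there is a unique `γ` with `γ^δ = u` and `‖γ − 1‖ < 1`;
moreover `‖γ − 1‖ = ‖u − 1‖`. -/
theorem exists_unique_root_close_to_one_nonarch
    {K : Type*} [NormedField K] [IsUltrametricDist K] [IsAlgClosed K]
    (δ : ℕ) (hδ : 1 ≤ δ) (hδnorm : ‖(δ : K)‖ = 1)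
    (u : K) (hu : ‖u - 1‖ < 1) :
    ∃ γ : K, γ ^ δ = u ∧ ‖γ - 1‖ < 1 ∧ ‖γ - 1‖ = ‖u - 1‖ ∧
      ∀ γ' : K, γ' ^ δ = u → ‖γ' - 1‖ < 1 → γ' = γ := by
  classical
  -- `‖u‖ = 1`
  have hu1 : ‖u‖ ≤ 1 := by
    have := IsUltrametricDist.norm_add_le_max (u - 1) 1
    simpa using this.trans (max_le hu.le (by simp))
  -- the polynomial X^δ - u
  set p : Polynomial K := Polynomial.X ^ δ - Polynomial.C u with hp
  have hmonic : p.Monic := by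
    rw [hp]
    apply Polynomial.monic_X_pow_sub_C
    omega
  have hsplits : p.Splits := IsAlgClosed.splits p
  have hprod : p = (p.roots.map (fun r => Polynomial.X - Polynomial.C r)).prod :=
    hsplits.eq_prod_roots_of_monic hmonic
  -- evaluate at 1
  have heval : 1 - u = ((p.roots.map (fun r => 1 - r)).prod) := by
    have := congrArg (Polynomial.eval 1) hprod
    simpa [hp, Polynomial.eval_multiset_prod, Multiset.map_map, Function.comp] using this
  -- each root r satisfies r ^ δ = u and ‖1 - r‖ ≤ 1
  have hroot : ∀ r ∈ p.roots, r ^ δ = u := by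
    intro r hr
    have := Polynomial.isRoot_of_mem_roots hr
    rw [hp] at this
    simpa [sub_eq_zero] using this
  have hrle : ∀ r ∈ p.roots, ‖1 - r‖ ≤ 1 := by
    intro r hr
    have hrn : ‖r‖ ≤ 1 := by
      by_contra hcon
      push_neg at hcon
      have : (1:ℝ) < ‖r‖ ^ δ := one_lt_pow₀ hcon (by omega)
      rw [← norm_pow, hroot r hr] at this
      linarith
    have := IsUltrametricDist.norm_add_le_max (1 : K) (-r)
    simpa [sub_eq_add_neg] using this.trans (max_le (by simp) (by simpa using hrn))
  -- there is a root with ‖1 - r‖ < 1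
  have hex : ∃ r ∈ p.roots, ‖1 - r‖ < 1 := by
    by_contra hcon
    push_neg at hcon
    have hall : ∀ r ∈ p.roots, ‖1 - r‖ = 1 := fun r hr => le_antisymm (hrle r hr) (hcon r hr)
    have : ‖1 - u‖ = 1 := by
      rw [heval]
      have hmap : ‖(p.roots.map (fun r => 1 - r)).prod‖
          = ((p.roots.map (fun r => 1 - r)).map (fun x => ‖x‖)).prod := by
        exact map_multiset_prod (normHom : K →*₀ ℝ).toMonoidHom _
      rw [hmap, Multiset.map_map]
      apply Multiset.prod_eq_one
      intro x hx
      obtain ⟨r, hr, rfl⟩ := Multiset.mem_map.mp hx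
      exact hall r hr
    rw [norm_sub_rev] at this
    rw [this] at hu
    exact lt_irrefl _ hu
  obtain ⟨γ, hγmem, hγlt⟩ := hex
  have hγpow : γ ^ δ = u := hroot γ hγmem
  have hγlt' : ‖γ - 1‖ < 1 := by rwa [norm_sub_rev] at hγlt
  have hnorm : ‖γ - 1‖ = ‖u - 1‖ := by
    rw [← hγpow]; exact (key_norm_pow_sub_one δ hδ hδnorm γ hγlt').symm
  refine ⟨γ, hγpow, hγlt', hnorm, ?_⟩
  intro γ' hγ' hγ'lt
  -- uniqueness: consider ζ = γ'/γ
  have hγnorm : ‖γ‖ = 1 := by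
    by_contra hne
    have h1 : ‖γ - 1 + 1‖ = max ‖γ - 1‖ ‖(1:K)‖ := by
      apply IsUltrametricDist.norm_add_eq_max_of_norm_ne_norm
      intro hc; rw [hc] at hγlt'; simp at hγlt'
    simp only [sub_add_cancel, norm_one] at h1
    rw [max_eq_right hγlt'.le] at h1
    exact hne h1
  have hγ0 : γ ≠ 0 := by intro h0; rw [h0] at hγnorm; simp at hγnorm
  have hζpow : (γ' / γ) ^ δ = 1 := by
    rw [div_pow, hγ', hγpow, div_self]
    intro h0
    rw [h0] at hu
    simp at hu
  have hζlt : ‖γ' / γ - 1‖ < 1 := by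
    have : γ' / γ - 1 = (γ' - γ) / γ := by field_simp
    rw [this, norm_div, hγnorm, div_one]
    have : γ' - γ = (γ' - 1) - (γ - 1) := by ring
    rw [this]
    calc ‖(γ' - 1) - (γ - 1)‖ ≤ max ‖γ' - 1‖ ‖-(γ - 1)‖ := by
          rw [sub_eq_add_neg]; exact IsUltrametricDist.norm_add_le_max _ _
      _ = max ‖γ' - 1‖ ‖γ - 1‖ := by rw [norm_neg]
      _ < 1 := max_lt hγ'lt hγlt'
  have : ‖(γ' / γ) ^ δ - 1‖ = ‖γ' / γ - 1‖ := key_norm_pow_sub_one δ hδ hδnorm _ hζlt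
  rw [hζpow, sub_self, norm_zero] at this
  have : γ' / γ = 1 := by
    have := this.symm
    rwa [norm_eq_zero, sub_eq_zero] at this
  field_simp at this
  exact this
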